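/- Let g : X → ℝ and f_1,...,f_p : X → ℝ, and let ḡ(x_0,...,x_p) := (1/(p+1)) ∑_{i=0}^{p} g(x_i). Then δ_p(ḡ · δ_{p-1}Alt_p(f_1 ⊗ ··· ⊗ f_p)) = δ_p Alt_{p+1}(g ⊗ f_1 ⊗ ··· ⊗ f_p). -/

import Mathlib

open Finset

/-- Symmetrizer of order `p`. -/
noncomputable def symAvg {X : Type*} (p : ℕ) (F : (Fin p → X) → ℝ) : (Fin p → X) → ℝ :=
  fun x => (p.factorial : ℝ)⁻¹ * ∑ σ : Equiv.Perm (Fin p), F (x ∘ σ)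

/-- Antisymmetrizer of order `p`. -/
noncomputable def altAvg {X : Type*} (p : ℕ) (F : (Fin p → X) → ℝ) : (Fin p → X) → ℝ :=
  fun x => (p.factorial : ℝ)⁻¹ * ∑ σ : Equiv.Perm (Fin p), ((Equiv.Perm.sign σ : ℤ) : ℝ) * F (x ∘ σ)

/-- Kolmogorov-Alexander-Spanier coboundary operator. -/
def cob {X : Type*} {p : ℕ} (F : (Fin p → X) → ℝ) : (Fin (p + 1) → X) → ℝ :=
  fun x => ∑ i : Fin (p + 1), (-1 : ℝ) ^ (i : ℕ) * F (x ∘ i.succAbove)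

/-- Tensor product of `p` scalar functions. -/
def tensorF {X : Type*} {p : ℕ} (f : Fin p → X → ℝ) : (Fin p → X) → ℝ :=
  fun x => ∏ i, f i (x i)

/-- A function of `p` variables is symmetric. -/
def IsSymmF {X : Type*} {p : ℕ} (F : (Fin p → X) → ℝ) : Prop :=
  ∀ σ : Equiv.Perm (Fin p), ∀ x, F (x ∘ σ) = F x

/-- A function of `p` variables is antisymmetric. -/
def IsAntisymmF {X : Type*} {p : ℕ} (F : (Fin p → X) → ℝ) : Prop :=
  ∀ σ : Equiv.Perm (Fin p), ∀ x, F (x ∘ σ) = ((Equiv.Perm.sign σ : ℤ) : ℝ) * F x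

/-- The averaged coefficient `ḡ`. -/
noncomputable def gbar {X : Type*} (p : ℕ) (g : X → ℝ) : (Fin (p + 1) → X) → ℝ :=
  fun x => ((p : ℝ) + 1)⁻¹ * ∑ i, g (x i)


lemma altAvg_tensor_det {X : Type*} (p : ℕ) (f : Fin p → X → ℝ) (x : Fin p → X) :
    altAvg p (tensorF f) x = (p.factorial : ℝ)⁻¹ * (Matrix.of fun i j => f j (x i)).det := by
  rw [altAvg, Matrix.det_apply]
  congr 1
  refine Finset.sum_congr rfl fun σ _ => ?_
  rw [Units.smul_def, zsmul_eq_mul]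
  rfl

lemma altAvg_cons {X : Type*} (p : ℕ) (g : X → ℝ) (f : Fin p → X → ℝ) (x : Fin (p+1) → X) :
    altAvg (p+1) (tensorF (Fin.cons g f)) x
      = ((p:ℝ)+1)⁻¹ * ∑ i : Fin (p+1), (-1:ℝ)^(i:ℕ) *
          (g (x i) * altAvg p (tensorF f) (x ∘ i.succAbove)) := by
  rw [altAvg_tensor_det, Matrix.det_succ_column_zero, Finset.mul_sum, Finset.mul_sum]
  refine Finset.sum_congr rfl fun i _ => ?_
  rw [altAvg_tensor_det]
  have h1 : (Matrix.of fun i' j => (Fin.cons g f : Fin (p+1) → X → ℝ) j (x i')).submatrix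
        i.succAbove Fin.succ
      = Matrix.of fun k l => f l (x (i.succAbove k)) := by
    ext k l; simp [Matrix.submatrix_apply]
  rw [h1]
  have h2 : ((p+1).factorial : ℝ) = ((p:ℝ)+1) * (p.factorial : ℝ) := by
    rw [Nat.factorial_succ]; push_cast; ring
  have h0 : (Matrix.of fun i' j => (Fin.cons g f : Fin (p+1) → X → ℝ) j (x i')) i 0 = g (x i) := by
    simp
  rw [h0, h2, mul_inv]
  have hfac : (p.factorial : ℝ) ≠ 0 := Nat.cast_ne_zero.mpr p.factorial_ne_zero
  field_simp
  simp only [Function.comp_apply]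

lemma sA_sA {p : ℕ} (a : Fin (p+2)) (b : Fin (p+1)) (h : (a:ℕ) ≤ (b:ℕ)) (k : Fin p) :
    a.succAbove (b.succAbove k) =
      (⟨(b:ℕ)+1, by omega⟩ : Fin (p+2)).succAbove
        ((⟨(a:ℕ), by omega⟩ : Fin (p+1)).succAbove k) := by
  simp only [Fin.succAbove, Fin.lt_def, Fin.coe_castSucc, Fin.val_succ]
  split_ifs <;> simp_all [Fin.ext_iff, Fin.lt_def] <;> omega

lemma sA_sA' {p : ℕ} (a : Fin (p+2)) (b : Fin (p+1)) (h : (b:ℕ) < (a:ℕ)) (k : Fin p) :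
    a.succAbove (b.succAbove k) =
      (⟨(b:ℕ), by omega⟩ : Fin (p+2)).succAbove
        ((⟨(a:ℕ)-1, by omega⟩ : Fin (p+1)).succAbove k) := by
  simp only [Fin.succAbove, Fin.lt_def, Fin.coe_castSucc, Fin.val_succ]
  split_ifs <;> simp_all [Fin.ext_iff, Fin.lt_def] <;> omega

/-- flip involution on index pairs -/
def flip2 {p : ℕ} : Fin (p+2) × Fin (p+1) → Fin (p+2) × Fin (p+1) := fun q =>
  if h : (q.1:ℕ) ≤ (q.2:ℕ) then (⟨(q.2:ℕ)+1, by omega⟩, ⟨(q.1:ℕ), by omega⟩)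
  else (⟨(q.2:ℕ), by omega⟩, ⟨(q.1:ℕ)-1, by omega⟩)

lemma cob_cob {X : Type*} {p : ℕ} (F : (Fin p → X) → ℝ) : cob (cob F) = 0 := by
  funext x
  show (∑ a : Fin (p+2), (-1:ℝ)^(a:ℕ) * cob F (x ∘ a.succAbove)) = 0
  simp only [cob, Finset.mul_sum]
  rw [← Finset.sum_product']
  set T : Fin (p+2) × Fin (p+1) → ℝ :=
    fun q => (-1:ℝ)^(q.1:ℕ) * ((-1:ℝ)^(q.2:ℕ) * F ((x ∘ q.1.succAbove) ∘ q.2.succAbove)) with hT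
  show ∑ q ∈ Finset.univ ×ˢ Finset.univ, T q = 0
  refine Finset.sum_ninvolution flip2 ?_ ?_
    (fun q => Finset.mem_product.mpr ⟨Finset.mem_univ _, Finset.mem_univ _⟩) ?_
  · rintro ⟨a, b⟩
    by_cases h : (a:ℕ) ≤ (b:ℕ)
    · have hF : ((x ∘ a.succAbove) ∘ b.succAbove) =
          ((x ∘ (⟨(b:ℕ)+1, by omega⟩ : Fin (p+2)).succAbove) ∘
            (⟨(a:ℕ), by omega⟩ : Fin (p+1)).succAbove) := by
        funext k; exact congrArg x (sA_sA a b h k)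
      simp only [hT, flip2, dif_pos h]
      rw [hF]
      have h2 : (-1:ℝ)^((b:ℕ)+1) = -(-1:ℝ)^(b:ℕ) := by rw [pow_succ]; ring
      simp only [h2]
      ring
    · push_neg at h
      have hF : ((x ∘ a.succAbove) ∘ b.succAbove) =
          ((x ∘ (⟨(b:ℕ), by omega⟩ : Fin (p+2)).succAbove) ∘
            (⟨(a:ℕ)-1, by omega⟩ : Fin (p+1)).succAbove) := by
        funext k; exact congrArg x (sA_sA' a b h k)
      simp only [hT, flip2, dif_neg (by omega : ¬ (a:ℕ) ≤ (b:ℕ))]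
      rw [hF]
      have h2 : (-1:ℝ)^(a:ℕ) = -(-1:ℝ)^((a:ℕ)-1) := by
        rw [show (a:ℕ) = ((a:ℕ)-1)+1 from by omega, pow_succ]
        rw [show (a:ℕ)-1+1-1 = (a:ℕ)-1 from by omega]
        ring
      rw [h2]
      ring
  · rintro ⟨a, b⟩ hne
    simp only [flip2]
    split_ifs with h <;>
      (intro hc; have := congrArg (fun r => (r.1 : ℕ)) hc; simp only at this; omega)
  · rintro ⟨a, b⟩
    simp only [flip2]
    split_ifs <;>
      first
        | (refine Prod.ext ?_ ?_ <;> ext <;> simp <;> omega)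
        | (exfalso; simp_all; omega)

lemma cob_add_mul_cob {X : Type*} {p : ℕ} (G : (Fin (p+1) → X) → ℝ)
    (H : (Fin p → X) → ℝ) (c : ℝ) :
    cob (fun x => G x + c * cob H x) = cob G := by
  funext x
  have h0 := congrFun (cob_cob H) x
  simp only [cob, Pi.zero_apply] at h0 ⊢
  simp only [mul_add, Finset.sum_add_distrib]
  have h1 : (∑ i : Fin (p+1+1), (-1:ℝ)^(i:ℕ) *
        (c * ∑ j : Fin (p+1), (-1:ℝ)^(j:ℕ) * H ((x ∘ i.succAbove) ∘ j.succAbove)))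
      = c * ∑ i : Fin (p+1+1), (-1:ℝ)^(i:ℕ) *
        (∑ j : Fin (p+1), (-1:ℝ)^(j:ℕ) * H ((x ∘ i.succAbove) ∘ j.succAbove)) := by
    rw [Finset.mul_sum]
    exact Finset.sum_congr rfl fun i _ => by ring
  rw [h1, h0, mul_zero, add_zero]

theorem stmt10 {X : Type*} (p : ℕ) (hp : 1 ≤ p) (g : X → ℝ) (f : Fin p → X → ℝ) :
    cob (fun x => gbar p g x * cob (altAvg p (tensorF f)) x) =
      cob (altAvg (p + 1) (tensorF (Fin.cons g f))) := by
  have key : (fun x : Fin (p+1) → X => gbar p g x * cob (altAvg p (tensorF f)) x)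
      = fun x => altAvg (p+1) (tensorF (Fin.cons g f)) x
          + ((p:ℝ)+1)⁻¹ *
            cob (fun y : Fin p → X => (∑ k, g (y k)) * altAvg p (tensorF f) y) x := by
    funext x
    rw [altAvg_cons, gbar]
    simp only [cob]
    have hS : (∑ i, g (x i)) *
          (∑ j : Fin (p+1), (-1:ℝ)^(j:ℕ) * altAvg p (tensorF f) (x ∘ j.succAbove))
        = (∑ j : Fin (p+1), (-1:ℝ)^(j:ℕ) *
            (g (x j) * altAvg p (tensorF f) (x ∘ j.succAbove)))
          + ∑ j : Fin (p+1), (-1:ℝ)^(j:ℕ) *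
              ((∑ k, g ((x ∘ j.succAbove) k)) * altAvg p (tensorF f) (x ∘ j.succAbove)) := by
      rw [Finset.mul_sum, ← Finset.sum_add_distrib]
      refine Finset.sum_congr rfl fun j _ => ?_
      rw [Fin.sum_univ_succAbove (fun i => g (x i)) j]
      simp only [Function.comp_apply]
      ring
    linear_combination ((p:ℝ)+1)⁻¹ * hS
  rw [key, cob_add_mul_cob]
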